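/- arXiv:1211.4271 — 6 statements merged into one kernel-verified Lean document; each statement's English description precedes it below -/
import Mathlib

section
/- Let m ≥ 2 and k ≥ 2. Let F_m denote the set of m-aperiodic reduced words over the alphabet A ∪ A⁻¹ of a free group of rank k (reduced words containing no subword of the form u^m with u nonempty). Then for all s ∈ ℕ: |F_m ∩ B(s+1)| ≥ (2k-1)·|F_m ∩ B(s)| − (2k/(2k-1))·Σ_{j≥1} (2k-1)^j·|F_m ∩ B(s+1−mj)|. -/
open Filter Set

/-- A word over the alphabet `Fin k × Bool` (generators and their inverses) is reduced if
no two consecutive letters are mutually inverse. -/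
def ReducedWord {k : ℕ} (l : List (Fin k × Bool)) : Prop :=
  l.Chain' fun a b => b ≠ (a.1, !a.2)

/-- A word contains an `m`-th power if some nonempty subword of the form `u^m` occurs. -/
def ContainsPower {k : ℕ} (m : ℕ) (l : List (Fin k × Bool)) : Prop :=
  ∃ p u s : List (Fin k × Bool), u ≠ [] ∧ l = p ++ (List.replicate m u).flatten ++ s

/-- The number of `m`-aperiodic reduced words of length at most `s`. -/
noncomputable def apCount (k m s : ℕ) : ℕ :=
  {l : List (Fin k × Bool) | ReducedWord l ∧ ¬ ContainsPower m l ∧ l.length ≤ s}.ncard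

namespace ApRec

variable {k : ℕ}

lemma containsPower_mono {m : ℕ} {l₁ l₂ : List (Fin k × Bool)} (h : ContainsPower m l₁)
    (hp : l₁ <+: l₂) : ContainsPower m l₂ := by
  obtain ⟨p, u, q, hu, rfl⟩ := h
  obtain ⟨r, rfl⟩ := hp
  exact ⟨p, u, q ++ r, hu, by simp⟩

lemma good_of_prefix {m : ℕ} {l w : List (Fin k × Bool)}
    (hw : ReducedWord w ∧ ¬ ContainsPower m w) (h : l <+: w) :
    ReducedWord l ∧ ¬ ContainsPower m l :=
  ⟨hw.1.prefix h, fun hc => hw.2 (containsPower_mono hc h)⟩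

lemma finite_S (m s : ℕ) :
    {l : List (Fin k × Bool) | ReducedWord l ∧ ¬ ContainsPower m l ∧ l.length ≤ s}.Finite :=
  (List.finite_length_le (Fin k × Bool) s).subset fun _ hl => hl.2.2

lemma finite_R (t : ℕ) :
    {l : List (Fin k × Bool) | ReducedWord l ∧ l.length = t}.Finite :=
  (List.finite_length_le (Fin k × Bool) t).subset fun _ hl => hl.2.le

variable (k) in
/-- The finset of good (aperiodic reduced) words of length at most `s`. -/
noncomputable def GF (m s : ℕ) : Finset (List (Fin k × Bool)) := (finite_S m s).toFinset

lemma mem_GF {m s : ℕ} {l : List (Fin k × Bool)} :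
    l ∈ GF k m s ↔ ReducedWord l ∧ ¬ ContainsPower m l ∧ l.length ≤ s :=
  Set.Finite.mem_toFinset _

lemma apCount_eq (m s : ℕ) : apCount k m s = (GF k m s).card :=
  Set.ncard_eq_toFinset_card _ (finite_S m s)

variable (k) in
/-- The finset of reduced words of length exactly `t`. -/
noncomputable def RF (t : ℕ) : Finset (List (Fin k × Bool)) := (finite_R t).toFinset

lemma mem_RF {t : ℕ} {l : List (Fin k × Bool)} :
    l ∈ RF k t ↔ ReducedWord l ∧ l.length = t :=
  Set.Finite.mem_toFinset _

lemma card_alphabet : Fintype.card (Fin k × Bool) = 2 * k := by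
  simp [Fintype.card_prod, mul_comm]

variable (k) in
/-- The letters that may legally extend the reduced word `w` on the right. -/
noncomputable def allowed (w : List (Fin k × Bool)) : Finset (Fin k × Bool) :=
  @Finset.filter _ (fun x => ∀ a ∈ w.getLast?, x ≠ (a.1, !a.2))
    (fun _ => Classical.propDecidable _) Finset.univ

lemma mem_allowed {w : List (Fin k × Bool)} {x : Fin k × Bool} :
    x ∈ allowed k w ↔ ∀ a ∈ w.getLast?, x ≠ (a.1, !a.2) := by
  simp [allowed]

lemma reducedWord_append_singleton {w : List (Fin k × Bool)} {x : Fin k × Bool}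
    (hw : ReducedWord w) :
    ReducedWord (w ++ [x]) ↔ x ∈ allowed k w := by
  rw [mem_allowed]
  unfold ReducedWord at *
  simp only [List.Chain'] at *
  rw [List.isChain_append]
  simp [hw]

lemma card_allowed_le {w : List (Fin k × Bool)} (hw : w ≠ []) :
    (allowed k w).card ≤ 2 * k - 1 := by
  have hbad : allowed k w ⊆ Finset.univ.erase ((w.getLast hw).1, !(w.getLast hw).2) := by
    intro x hx
    rw [mem_allowed] at hx
    refine Finset.mem_erase.2 ⟨hx _ ?_, Finset.mem_univ _⟩
    rw [List.getLast?_eq_getLast_of_ne_nil hw]; rfl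
  calc (allowed k w).card ≤ _ := Finset.card_le_card hbad
    _ = 2 * k - 1 := by
        rw [Finset.card_erase_of_mem (Finset.mem_univ _), Finset.card_univ, card_alphabet]

lemma le_card_allowed (w : List (Fin k × Bool)) : 2 * k - 1 ≤ (allowed k w).card := by
  classical
  rcases hl : w.getLast? with _ | a
  · have : allowed k w = Finset.univ := by
      ext x; simp [mem_allowed, hl]
    rw [this, Finset.card_univ, card_alphabet]
    omega
  · have hsub : Finset.univ.erase (a.1, !a.2) ⊆ allowed k w := by
      intro x hx
      rw [Finset.mem_erase] at hx
      rw [mem_allowed]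
      intro b hb
      rw [hl] at hb
      simp only [Option.mem_def, Option.some_inj] at hb
      subst hb
      exact hx.1
    calc 2 * k - 1 = (Finset.univ.erase (a.1, !a.2)).card := by
          rw [Finset.card_erase_of_mem (Finset.mem_univ _), Finset.card_univ, card_alphabet]
      _ ≤ (allowed k w).card := Finset.card_le_card hsub

lemma card_RF_le (hk : 1 ≤ k) : ∀ t : ℕ, (RF k (t + 1)).card ≤ 2 * k * (2 * k - 1) ^ t := by
  classical
  intro t
  induction t with
  | zero =>
    haveI : Inhabited (Fin k × Bool) := ⟨(⟨0, hk⟩, true)⟩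
    have h : (RF k 1).card ≤ Fintype.card (Fin k × Bool) := by
      rw [← Finset.card_univ]
      apply Finset.card_le_card_of_injOn (fun l => l.headI)
      · intro l _; exact Finset.mem_univ _
      · intro l hl l' hl' hh
        rw [Finset.mem_coe, mem_RF] at hl hl'
        obtain ⟨a, rfl⟩ := List.length_eq_one_iff.1 hl.2
        obtain ⟨b, rfl⟩ := List.length_eq_one_iff.1 hl'.2
        simpa using hh
    rw [card_alphabet] at h
    simpa using h
  | succ t ih =>
    have step : (RF k (t + 2)).card ≤ (2 * k - 1) * (RF k (t + 1)).card := by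
      apply Finset.card_le_mul_card_image_of_maps_to (f := fun l => l.dropLast)
      · intro l hl
        rw [mem_RF] at hl ⊢
        exact ⟨hl.1.prefix (List.dropLast_prefix l), by simp [hl.2]⟩
      · intro b hb
        rw [mem_RF] at hb
        have hbne : b ≠ [] := by intro h; rw [h] at hb; simp at hb
        have hsub : (RF k (t + 2)).filter (fun l => l.dropLast = b) ⊆
            (allowed k b).image (fun x => b ++ [x]) := by
          intro l hl
          rw [Finset.mem_filter, mem_RF] at hl
          obtain ⟨⟨hred, hlen⟩, hdrop⟩ := hl
          have hlne : l ≠ [] := by intro h; rw [h] at hlen; simp at hlen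
          have hrepr : b ++ [l.getLast hlne] = l := by
            rw [← hdrop]; exact List.dropLast_append_getLast hlne
          refine Finset.mem_image.2 ⟨l.getLast hlne, ?_, hrepr⟩
          rw [← reducedWord_append_singleton hb.1, hrepr]
          exact hred
        calc ((RF k (t + 2)).filter (fun l => l.dropLast = b)).card
            ≤ ((allowed k b).image (fun x => b ++ [x])).card := Finset.card_le_card hsub
          _ ≤ (allowed k b).card := Finset.card_image_le
          _ ≤ 2 * k - 1 := card_allowed_le hbne
    calc (RF k (t + 2)).card ≤ (2 * k - 1) * (RF k (t + 1)).card := step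
      _ ≤ (2 * k - 1) * (2 * k * (2 * k - 1) ^ t) := Nat.mul_le_mul_left _ ih
      _ = 2 * k * (2 * k - 1) ^ (t + 1) := by
          set c := 2 * k - 1 with hc
          ring

lemma length_flatten_replicate (m : ℕ) (u : List (Fin k × Bool)) :
    (List.replicate m u).flatten.length = m * u.length := by
  simp [List.length_flatten, List.map_replicate, List.sum_replicate, smul_eq_mul]

/-- If a word ends in an `m`-th power of a word of length `t`, it is determined by its
canonical prefix and period. -/
lemma pow_suffix_decomp {m t : ℕ} (hm : 1 ≤ m) {l p u : List (Fin k × Bool)}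
    (hu : u.length = t) (he : l = p ++ (List.replicate m u).flatten) :
    l.take (l.length - m * t) = p ∧ l.drop (l.length - t) = u ∧
      l.length = p.length + m * t := by
  have hflen : (List.replicate m u).flatten.length = m * t := by
    rw [length_flatten_replicate, hu]
  have hlen : l.length = p.length + m * t := by
    rw [he, List.length_append, hflen]
  have htake : l.take (l.length - m * t) = p := by
    rw [show l.length - m * t = p.length by omega, he, List.take_left]
  have hrep : (List.replicate m u).flatten = (List.replicate (m - 1) u).flatten ++ u := by
    conv_lhs => rw [show m = (m - 1) + 1 by omega, List.replicate_succ']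
    simp
  have hX : l = (p ++ (List.replicate (m - 1) u).flatten) ++ u := by
    rw [he, hrep, List.append_assoc]
  have hXlen : (p ++ (List.replicate (m - 1) u).flatten).length = l.length - t := by
    rw [List.length_append, length_flatten_replicate, hu, hlen, Nat.sub_mul, one_mul]
    have h2 : t ≤ m * t := Nat.le_mul_of_pos_left t (by omega)
    omega
  have hdrop : l.drop (l.length - t) = u := by
    rw [← hXlen]
    conv_lhs => rw [hX]
    exact List.drop_left
  exact ⟨htake, hdrop, hlen⟩

/-- Main counting recurrence, natural number version. -/
lemma core (k m : ℕ) (hk : 2 ≤ k) (hm : 2 ≤ m) (s : ℕ) :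
    (2 * k - 1) * apCount k m s ≤
      apCount k m (s + 1) +
        ∑ t ∈ Finset.Icc 1 (s + 1),
          2 * k * (2 * k - 1) ^ (t - 1) *
            (if m * t ≤ s + 1 then apCount k m (s + 1 - m * t) else 0) := by
  classical
  set c := 2 * k - 1 with hc
  set Ext : Finset (List (Fin k × Bool)) :=
    (GF k m s).biUnion (fun w => (allowed k w).image (fun x => w ++ [x])) with hExt
  have mem_Ext : ∀ {l}, l ∈ Ext ↔ ∃ w ∈ GF k m s, ∃ x ∈ allowed k w, w ++ [x] = l := by
    intro l
    simp [hExt, Finset.mem_biUnion, Finset.mem_image]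
  -- Step A : c * |GF s| ≤ |Ext|
  have stepA : c * (GF k m s).card ≤ Ext.card := by
    have hdisj : ∀ w₁ ∈ GF k m s, ∀ w₂ ∈ GF k m s, w₁ ≠ w₂ →
        Disjoint ((allowed k w₁).image (fun x => w₁ ++ [x]))
          ((allowed k w₂).image (fun x => w₂ ++ [x])) := by
      intro w₁ _ w₂ _ hne
      rw [Finset.disjoint_left]
      intro l h1 h2
      obtain ⟨x, _, rfl⟩ := Finset.mem_image.1 h1
      obtain ⟨y, _, he⟩ := Finset.mem_image.1 h2
      apply hne
      have := congrArg List.dropLast he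
      simpa [List.dropLast_concat] using this.symm
    rw [hExt, Finset.card_biUnion hdisj]
    have : ∀ w ∈ GF k m s, c ≤ ((allowed k w).image (fun x => w ++ [x])).card := by
      intro w _
      rw [Finset.card_image_of_injOn]
      · exact le_card_allowed w
      · intro x _ y _ hxy
        have := List.append_cancel_left hxy
        simpa using this
    calc c * (GF k m s).card = (GF k m s).card • c := by rw [smul_eq_mul, mul_comm]
      _ ≤ _ := Finset.card_nsmul_le_sum _ _ _ this
  -- the bad extensions
  set Bad : Finset (List (Fin k × Bool)) := Ext.filter (fun l => ContainsPower m l) with hBad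
  -- Step B : |Ext| ≤ |GF (s+1)| + |Bad|
  have stepB : Ext.card ≤ (GF k m (s + 1)).card + Bad.card := by
    have h := Finset.card_filter_add_card_filter_not
      (s := Ext) (p := fun l => ContainsPower m l)
    rw [← hBad] at h
    have hsub : Ext.filter (fun l => ¬ ContainsPower m l) ⊆ GF k m (s + 1) := by
      intro l hl
      rw [Finset.mem_filter] at hl
      obtain ⟨hlE, hnp⟩ := hl
      obtain ⟨w, hw, x, hx, rfl⟩ := mem_Ext.1 hlE
      rw [mem_GF] at hw ⊢
      refine ⟨(reducedWord_append_singleton hw.1).2 hx, hnp, ?_⟩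
      simp only [List.length_append, List.length_cons, List.length_nil]
      omega
    have : (Ext.filter (fun l => ¬ ContainsPower m l)).card ≤ (GF k m (s + 1)).card :=
      Finset.card_le_card hsub
    omega
  -- Step C : |Bad| ≤ the sum
  have stepC : Bad.card ≤
      ∑ t ∈ Finset.Icc 1 (s + 1),
        2 * k * c ^ (t - 1) * (if m * t ≤ s + 1 then apCount k m (s + 1 - m * t) else 0) := by
    -- the canonical decomposition predicate
    set Q : ℕ → List (Fin k × Bool) → Prop := fun t l =>
      m * t ≤ l.length ∧
        l.take (l.length - m * t) ++
          (List.replicate m (l.drop (l.length - t))).flatten = l with hQ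
    have hcover : Bad ⊆ (Finset.Icc 1 (s + 1)).biUnion
        (fun t => Bad.filter (fun l => Q t l)) := by
      intro l hl
      have hl' := hl
      rw [hBad, Finset.mem_filter] at hl'
      obtain ⟨hlE, hpow⟩ := hl'
      obtain ⟨w, hw, x, hx, rfl⟩ := mem_Ext.1 hlE
      rw [mem_GF] at hw
      -- the power occurrence must be a suffix
      obtain ⟨p, u, q, hu, he⟩ := hpow
      have hq : q = [] := by
        by_contra hq
        apply hw.2.1
        refine ⟨p, u, q.dropLast, hu, ?_⟩
        have h1 := congrArg List.dropLast he
        rw [List.dropLast_concat, List.dropLast_append_of_ne_nil hq] at h1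
        exact h1
      rw [hq, List.append_nil] at he
      set t := u.length with htdef
      have ht1 : 1 ≤ t := List.length_pos_iff.2 hu
      obtain ⟨htake, hdrop, hlen⟩ := pow_suffix_decomp (by omega) htdef.symm he
      have hmt : m * t ≤ (w ++ [x]).length := by omega
      have hts : t ≤ s + 1 := by
        have hwl : w.length ≤ s := hw.2.2
        have : t ≤ m * t := Nat.le_mul_of_pos_left t (by omega)
        have : (w ++ [x]).length = w.length + 1 := by simp
        omega
      refine Finset.mem_biUnion.2 ⟨t, Finset.mem_Icc.2 ⟨ht1, hts⟩, ?_⟩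
      rw [Finset.mem_filter]
      refine ⟨hl, hmt, ?_⟩
      rw [htake, hdrop, ← he]
    have hpiece : ∀ t ∈ Finset.Icc 1 (s + 1),
        (Bad.filter (fun l => Q t l)).card ≤
          2 * k * c ^ (t - 1) * (if m * t ≤ s + 1 then apCount k m (s + 1 - m * t) else 0) := by
      intro t htmem
      obtain ⟨ht1, hts⟩ := Finset.mem_Icc.1 htmem
      by_cases hmt : m * t ≤ s + 1
      · rw [if_pos hmt]
        -- injection into RF t ×ˢ GF (s+1 - m*t)
        have hinj : (Bad.filter (fun l => Q t l)).card ≤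
            ((RF k t) ×ˢ (GF k m (s + 1 - m * t))).card := by
          apply Finset.card_le_card_of_injOn
            (fun l => (l.drop (l.length - t), l.take (l.length - m * t)))
          · intro l hl
            rw [Finset.mem_coe, Finset.mem_filter] at hl
            obtain ⟨hlB, hQl⟩ := hl
            rw [hBad, Finset.mem_filter] at hlB
            obtain ⟨hlE, -⟩ := hlB
            obtain ⟨w, hw, x, hx, hwl⟩ := mem_Ext.1 hlE
            rw [mem_GF] at hw
            have hred : ReducedWord l := by
              rw [← hwl]; exact (reducedWord_append_singleton hw.1).2 hx
            have hlength : l.length = w.length + 1 := by rw [← hwl]; simp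
            have htm : t ≤ m * t := Nat.le_mul_of_pos_left t (by omega)
            obtain ⟨hmtl, heq⟩ := hQl
            rw [Finset.mem_coe, Finset.mem_product]
            constructor
            · rw [mem_RF]
              exact ⟨hred.suffix (List.drop_suffix _ _), by simp; omega⟩
            · rw [mem_GF]
              have h2 : 2 ≤ m * t := by nlinarith
              have hn : l.length - m * t ≤ w.length := by omega
              have hpre : l.take (l.length - m * t) <+: w := by
                set n := l.length - m * t with hndef
                have : l.take n = w.take n := by
                  rw [← hwl, List.take_append,
                    show n - w.length = 0 by omega, List.take_zero, List.append_nil]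
                rw [this]
                exact List.take_prefix _ _
              have hgood := good_of_prefix ⟨hw.1, hw.2.1⟩ hpre
              refine ⟨hgood.1, hgood.2, ?_⟩
              have hwlen : w.length ≤ s := hw.2.2
              simp only [List.length_take]
              omega
          · intro l hl l' hl' hfeq
            rw [Finset.mem_coe, Finset.mem_filter] at hl hl'
            have h1 := hl.2.2
            have h2 := hl'.2.2
            simp only [Prod.mk.injEq] at hfeq
            rw [← h1, ← h2, hfeq.1, hfeq.2]
        rw [Finset.card_product] at hinj
        have hRF : (RF k t).card ≤ 2 * k * c ^ (t - 1) := by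
          have := card_RF_le (by omega : 1 ≤ k) (t - 1)
          rw [show t - 1 + 1 = t by omega] at this
          exact this
        calc (Bad.filter (fun l => Q t l)).card
            ≤ (RF k t).card * (GF k m (s + 1 - m * t)).card := hinj
          _ ≤ 2 * k * c ^ (t - 1) * apCount k m (s + 1 - m * t) := by
              rw [apCount_eq]
              exact Nat.mul_le_mul_right _ hRF
      · rw [if_neg hmt]
        have : Bad.filter (fun l => Q t l) = ∅ := by
          rw [Finset.eq_empty_iff_forall_notMem]
          intro l hl
          rw [Finset.mem_filter] at hl
          obtain ⟨hlB, hmtl, -⟩ := hl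
          rw [hBad, Finset.mem_filter] at hlB
          obtain ⟨w, hw, x, hx, hwl⟩ := mem_Ext.1 hlB.1
          rw [mem_GF] at hw
          have : l.length = w.length + 1 := by rw [← hwl]; simp
          have := hw.2.2
          omega
        simp [this]
    calc Bad.card ≤ ((Finset.Icc 1 (s + 1)).biUnion
          (fun t => Bad.filter (fun l => Q t l))).card := Finset.card_le_card hcover
      _ ≤ ∑ t ∈ Finset.Icc 1 (s + 1), (Bad.filter (fun l => Q t l)).card :=
          Finset.card_biUnion_le
      _ ≤ _ := Finset.sum_le_sum hpiece
  calc (2 * k - 1) * apCount k m s = c * (GF k m s).card := by rw [apCount_eq]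
    _ ≤ Ext.card := stepA
    _ ≤ (GF k m (s + 1)).card + Bad.card := stepB
    _ ≤ apCount k m (s + 1) + Bad.card := by rw [apCount_eq]
    _ ≤ _ := by exact Nat.add_le_add_left stepC _

end ApRec

/-- Recurrence: `|F_m ∩ B(s+1)| ≥ (2k-1)|F_m ∩ B(s)| - (2k/(2k-1)) Σ_{j≥1} (2k-1)^j |F_m ∩ B(s+1-mj)|`,
where the terms with `s+1-mj < 0` vanish. -/
theorem aperiodic_count_recurrence (k m : ℕ) (hk : 2 ≤ k) (hm : 2 ≤ m) (s : ℕ) :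
    (2 * k - 1 : ℝ) * apCount k m s -
      (2 * k / (2 * k - 1) : ℝ) *
        ∑ j ∈ Finset.Icc 1 (s + 1),
          (2 * k - 1 : ℝ) ^ j * (if m * j ≤ s + 1 then (apCount k m (s + 1 - m * j) : ℝ) else 0)
      ≤ (apCount k m (s + 1) : ℝ) := by
  have hcore := ApRec.core k m hk hm s
  have hne : (2 * (k : ℝ) - 1) ≠ 0 := by
    have : (2 : ℝ) ≤ k := by exact_mod_cast hk
    nlinarith
  have hcast : ((2 * k - 1 : ℕ) : ℝ) = 2 * (k : ℝ) - 1 := by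
    have : 1 ≤ 2 * k := by omega
    push_cast [Nat.cast_sub this]
    ring
  have hsum : (2 * (k : ℝ) / (2 * (k : ℝ) - 1)) *
      ∑ j ∈ Finset.Icc 1 (s + 1),
        (2 * (k : ℝ) - 1) ^ j * (if m * j ≤ s + 1 then (apCount k m (s + 1 - m * j) : ℝ) else 0)
      = ∑ j ∈ Finset.Icc 1 (s + 1),
        (2 * (k : ℝ) * (2 * (k : ℝ) - 1) ^ (j - 1)) *
          (if m * j ≤ s + 1 then (apCount k m (s + 1 - m * j) : ℝ) else 0) := by
    rw [Finset.mul_sum]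
    apply Finset.sum_congr rfl
    intro j hj
    obtain ⟨hj1, -⟩ := Finset.mem_Icc.1 hj
    have hpow : (2 * (k : ℝ) - 1) ^ j = (2 * (k : ℝ) - 1) ^ (j - 1) * (2 * (k : ℝ) - 1) := by
      rw [← pow_succ, show j - 1 + 1 = j by omega]
    rw [hpow]
    field_simp
  -- cast the core inequality
  have hcastcore : (2 * (k : ℝ) - 1) * (apCount k m s : ℝ) ≤
      (apCount k m (s + 1) : ℝ) +
        ∑ j ∈ Finset.Icc 1 (s + 1),
          (2 * (k : ℝ) * (2 * (k : ℝ) - 1) ^ (j - 1)) *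
            (if m * j ≤ s + 1 then (apCount k m (s + 1 - m * j) : ℝ) else 0) := by
    have := (Nat.cast_le (α := ℝ)).2 hcore
    push_cast [hcast] at this
    convert this using 2
  rw [sub_le_iff_le_add]
  calc (2 * (k : ℝ) - 1) * (apCount k m s : ℝ) ≤ _ := hcastcore
    _ = (apCount k m (s + 1) : ℝ) +
        (2 * (k : ℝ) / (2 * (k : ℝ) - 1)) *
          ∑ j ∈ Finset.Icc 1 (s + 1),
            (2 * (k : ℝ) - 1) ^ j *
              (if m * j ≤ s + 1 then (apCount k m (s + 1 - m * j) : ℝ) else 0) := by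
        rw [hsum]
end

section
/- Let k ≥ 2 and a > 2k. There exists m_0 such that for every integer m ≥ m_0, the set F_m of m-aperiodic reduced words in the free group F_k has exponential growth rate at least (2k-1)·(1 − a·(2k-1)^{−m}). -/
open Filter Set

namespace Ap

variable {k : ℕ}

lemma flatten_replicate_length (m : ℕ) (u : List (Fin k × Bool)) :
    ((List.replicate m u).flatten).length = m * u.length := by
  induction m with
  | zero => simp
  | succ n ih => simp [List.replicate_succ, ih, Nat.succ_mul, Nat.add_comm]

lemma flatten_replicate_succ (m : ℕ) (u : List (Fin k × Bool)) :
    (List.replicate (m+1) u).flatten = u ++ (List.replicate m u).flatten := by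
  simp [List.replicate_succ]

lemma not_containsPower_prefix {m : ℕ} {v w : List (Fin k × Bool)} (h : ¬ ContainsPower m w)
    (hp : v <+: w) : ¬ ContainsPower m v := by
  rintro ⟨p, u, s, hu, rfl⟩
  obtain ⟨r, rfl⟩ := hp
  exact h ⟨p, u, s ++ r, hu, by simp⟩

lemma le_length_of_containsPower {m : ℕ} {l : List (Fin k × Bool)} (h : ContainsPower m l) :
    m ≤ l.length := by
  obtain ⟨p, u, s, hu, rfl⟩ := h
  have h1 : 1 ≤ u.length := List.length_pos_iff.2 hu
  have := flatten_replicate_length (k := k) m u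
  simp only [List.length_append, this]
  nlinarith

def ApSet (k m n : ℕ) : Set (List (Fin k × Bool)) :=
  {l | ReducedWord l ∧ ¬ ContainsPower m l ∧ l.length = n}

lemma apSet_finite (k m n : ℕ) : (ApSet k m n).Finite :=
  (List.finite_length_eq _ n).subset fun _ hl => hl.2.2

noncomputable def Nc (k m n : ℕ) : ℕ := (ApSet k m n).ncard

lemma Nc_zero (m : ℕ) (hm : 1 ≤ m) : Nc k m 0 = 1 := by
  have h : ApSet k m 0 = {([] : List (Fin k × Bool))} := by
    ext l
    constructor
    · rintro ⟨-, -, hl⟩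
      simpa using List.length_eq_zero_iff.1 hl
    · rintro rfl
      refine ⟨List.isChain_nil, fun hc => ?_, rfl⟩
      have := le_length_of_containsPower hc
      simp at this; omega
  simp [Nc, h]

lemma Nc_one (m : ℕ) (hm : 2 ≤ m) : Nc k m 1 = 2 * k := by
  have h : ApSet k m 1 = (fun x : Fin k × Bool => [x]) '' Set.univ := by
    ext l
    constructor
    · rintro ⟨-, -, hl⟩
      obtain ⟨x, rfl⟩ := List.length_eq_one_iff.1 hl
      exact ⟨x, trivial, rfl⟩
    · rintro ⟨x, -, rfl⟩
      refine ⟨List.isChain_singleton _, fun hc => ?_, rfl⟩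
      have := le_length_of_containsPower hc
      simp at this; omega
  rw [Nc, h, Set.ncard_image_of_injective _ (fun x y h => by simpa using h), Set.ncard_univ]
  simp [Nat.card_eq_fintype_card, mul_comm]

lemma Nc_le_apCount (m n : ℕ) : Nc k m n ≤ apCount k m n := by
  refine Set.ncard_le_ncard (fun l hl => ⟨hl.1, hl.2.1, le_of_eq hl.2.2⟩) ?_
  exact (List.finite_length_le _ n).subset fun _ hl => hl.2.2


lemma key (m n : ℕ) (hk : 1 ≤ k) (hm : 2 ≤ m) (hn : 1 ≤ n) :
    (2 * k - 1) * Nc k m n ≤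
      Nc k m (n+1) + ∑ t ∈ Finset.Icc 1 ((n+1)/m), Nc k m (n + 1 - t * (m-1)) := by
  classical
  set F : Finset (List (Fin k × Bool)) := (apSet_finite k m n).toFinset with hF
  set E : Finset (List (Fin k × Bool)) :=
    F.biUnion (fun w =>
      (Finset.univ.filter (fun x : Fin k × Bool => ReducedWord (w ++ [x]))).image
        (fun x => w ++ [x])) with hE
  -- facts about members of F
  have hmemF : ∀ w ∈ F, ReducedWord w ∧ ¬ ContainsPower m w ∧ w.length = n := by
    intro w hw
    exact (apSet_finite k m n).mem_toFinset.1 hw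
  have hwne : ∀ w ∈ F, w ≠ [] := by
    intro w hw hnil
    have := (hmemF w hw).2.2
    rw [hnil] at this
    simp at this; omega
  -- Step 1 : E.card = (2k-1) * F.card
  have hcard : E.card = (2 * k - 1) * F.card := by
    rw [hE, Finset.card_biUnion ?disj]
    case disj =>
      intro w₁ h₁ w₂ h₂ hne
      rw [Function.onFun, Finset.disjoint_left]
      rintro e he1 he2
      obtain ⟨x, -, rfl⟩ := Finset.mem_image.1 he1
      obtain ⟨y, -, hxy⟩ := Finset.mem_image.1 he2
      exact hne (by simpa using congrArg List.dropLast hxy.symm)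
    have hone : ∀ w ∈ F, ((Finset.univ.filter
        (fun x : Fin k × Bool => ReducedWord (w ++ [x]))).image (fun x => w ++ [x])).card
        = 2 * k - 1 := by
      intro w hw
      rw [Finset.card_image_of_injective _ (fun x y h => by simpa using h)]
      have hne := hwne w hw
      have hlast : w.getLast? = some (w.getLast hne) := List.getLast?_eq_getLast hne
      have : (Finset.univ.filter (fun x : Fin k × Bool => ReducedWord (w ++ [x])))
          = Finset.univ.erase ((w.getLast hne).1, !(w.getLast hne).2) := by
        ext x
        simp only [Finset.mem_filter, Finset.mem_univ, true_and, Finset.mem_erase]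
        rw [ReducedWord, List.Chain', List.isChain_append]
        constructor
        · rintro ⟨-, -, hrel⟩
          exact ⟨hrel _ (by simp [hlast]) x rfl, trivial⟩
        · rintro ⟨hxne, -⟩
          refine ⟨(hmemF w hw).1, by simp, ?_⟩
          intro c hc y hy
          rw [hlast] at hc
          simp at hc hy
          subst hc; subst hy
          exact hxne
      rw [this, Finset.card_erase_of_mem (Finset.mem_univ _)]
      simp [Fintype.card_prod]
      omega
    rw [Finset.sum_congr rfl hone, Finset.sum_const, smul_eq_mul, mul_comm]
  -- Step 2 : inclusion
  have hsub : E ⊆ (apSet_finite k m (n+1)).toFinset ∪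
      (Finset.Icc 1 ((n+1)/m)).biUnion (fun t =>
        ((apSet_finite k m (n + 1 - t * (m-1))).toFinset).image
          (fun v => v ++ (List.replicate (m-1) (v.drop (v.length - t))).flatten)) := by
    intro e he
    rw [hE, Finset.mem_biUnion] at he
    obtain ⟨w, hwF, he⟩ := he
    obtain ⟨x, hx, rfl⟩ := Finset.mem_image.1 he
    have hxred : ReducedWord (w ++ [x]) := (Finset.mem_filter.1 hx).2
    obtain ⟨hred, hnp, hlen⟩ := hmemF w hwF
    by_cases hcp : ContainsPower m (w ++ [x])
    · -- bad case
      obtain ⟨p, u, s, hu, heq⟩ := hcp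
      have hs : s = [] := by
        by_contra hs
        obtain ⟨b, s', rfl⟩ := List.exists_cons_of_ne_nil hs
        apply hnp
        have hdrop : w = (w ++ [x]).dropLast := by simp
        rw [heq, List.dropLast_append_cons] at hdrop
        exact ⟨p, u, (b :: s').dropLast, hu, hdrop⟩
      subst hs
      rw [List.append_nil] at heq
      set t := u.length with ht
      have ht1 : 1 ≤ t := List.length_pos_iff.2 hu
      have hlen2 : n + 1 = p.length + m * t := by
        have := congrArg List.length heq
        simpa [flatten_replicate_length, hlen] using this
      have h2t : 2 * t ≤ m * t := Nat.mul_le_mul_right t hm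
      have hmt : t * (m - 1) + t = m * t := by
        cases m with
        | zero => omega
        | succ m' => simp [Nat.succ_sub_one, Nat.succ_mul, Nat.mul_comm t m']
      refine Finset.mem_union_right _ (Finset.mem_biUnion.2 ⟨t, ?_, ?_⟩)
      · rw [Finset.mem_Icc]
        have hcm : t * m = m * t := Nat.mul_comm t m
        refine ⟨ht1, (Nat.le_div_iff_mul_le (by omega)).2 (by omega)⟩
      · -- e = g t (p ++ u)
        have hm1 : m - 1 + 1 = m := by omega
        have heq2 : w ++ [x] = (p ++ u) ++ (List.replicate (m-1) u).flatten := by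
          rw [heq, List.append_assoc]
          congr 1
          conv_lhs => rw [← hm1, flatten_replicate_succ]
        have hvpre_e : (p ++ u) <+: (w ++ [x]) := ⟨_, heq2.symm⟩
        have hvlen : (p ++ u).length = n + 1 - t * (m - 1) := by
          simp only [List.length_append, ← ht]
          omega
        have hvw : (p ++ u) <+: w := by
          refine List.prefix_of_prefix_length_le hvpre_e ⟨[x], rfl⟩ ?_
          rw [hvlen, hlen]; omega
        refine Finset.mem_image.2 ⟨p ++ u, ?_, ?_⟩
        · rw [Set.Finite.mem_toFinset]
          exact ⟨hred.prefix hvw, not_containsPower_prefix hnp hvw, hvlen⟩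
        · have hdropv : (p ++ u).drop ((p ++ u).length - t) = u := by
            have : (p ++ u).length - t = p.length := by simp [← ht]
            rw [this, List.drop_left]
          rw [hdropv, ← heq2]
    · exact Finset.mem_union_left _ (by
        rw [Set.Finite.mem_toFinset]
        exact ⟨hxred, hcp, by simp [hlen]⟩)
  -- Step 3 : assemble
  have hNc : ∀ m' n', Nc k m' n' = ((apSet_finite k m' n').toFinset).card := by
    intro m' n'
    rw [Nc, Set.ncard_eq_toFinset_card _ (apSet_finite k m' n')]
  calc (2 * k - 1) * Nc k m n = E.card := by rw [hNc, hcard]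
    _ ≤ _ := Finset.card_le_card hsub
    _ ≤ (apSet_finite k m (n+1)).toFinset.card +
        ((Finset.Icc 1 ((n+1)/m)).biUnion _).card := Finset.card_union_le _ _
    _ ≤ Nc k m (n+1) + ∑ t ∈ Finset.Icc 1 ((n+1)/m), Nc k m (n + 1 - t * (m-1)) := by
        rw [hNc]
        refine Nat.add_le_add le_rfl (le_trans (Finset.card_biUnion_le) ?_)
        refine Finset.sum_le_sum (fun t ht => ?_)
        rw [hNc]
        exact Finset.card_image_le
lemma apCount_le (k m r : ℕ) : apCount k m r ≤ (2 * k + 1) ^ (r + 1) := by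
  classical
  rw [apCount]
  have h := Set.ncard_le_ncard_of_injOn
    (s := {l : List (Fin k × Bool) | ReducedWord l ∧ ¬ ContainsPower m l ∧ l.length ≤ r})
    (t := (Set.univ : Set (Fin (r+1) → Option (Fin k × Bool))))
    (fun l => fun i => l[(i : ℕ)]?) (fun _ _ => trivial) ?_ Set.finite_univ
  · refine le_trans h ?_
    rw [Set.ncard_univ, Nat.card_eq_fintype_card]
    rw [Fintype.card_fun]
    simp only [Fintype.card_option, Fintype.card_prod, Fintype.card_fin, Fintype.card_bool,
      Fintype.card_fin]
    exact Nat.pow_le_pow_left (by omega) _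
  · intro l₁ h₁ l₂ h₂ hfeq
    have hl₁ : l₁.length ≤ r := h₁.2.2
    have hl₂ : l₂.length ≤ r := h₂.2.2
    apply List.ext_getElem?
    intro n
    by_cases hn : n < r + 1
    · exact congrFun hfeq ⟨n, hn⟩
    · rw [List.getElem?_eq_none (by omega : l₁.length ≤ n),
        List.getElem?_eq_none (by omega : l₂.length ≤ n)]

lemma geom_Icc_le {c : ℝ} (hc0 : 0 ≤ c) (hc1 : c < 1) (T : ℕ) :
    ∑ t ∈ Finset.Icc 1 T, c ^ t ≤ c / (1 - c) := by
  have h1c : 0 < 1 - c := by linarith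
  have hform : ∀ T : ℕ, ∑ t ∈ Finset.Icc 1 T, c ^ t = (c - c ^ (T+1)) / (1 - c) := by
    intro T
    induction T with
    | zero => simp
    | succ T ih =>
      rw [Finset.sum_Icc_succ_top (by omega), ih]
      field_simp
      ring
  rw [hform, div_le_div_iff₀ h1c h1c]
  nlinarith [mul_nonneg (pow_nonneg hc0 (T+1)) h1c.le]

end Ap

open Ap

set_option maxHeartbeats 1000000 in
/-- For `k ≥ 2` and `a > 2k` there is `m₀` such that for all `m ≥ m₀` the exponential growth
rate of the set of `m`-aperiodic reduced words is at least `(2k-1)(1 - a(2k-1)^{-m})`. -/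
theorem aperiodic_growth_rate (k : ℕ) (hk : 2 ≤ k) (a : ℝ) (ha : 2 * k < a) :
    ∃ m₀ : ℕ, ∀ m : ℕ, m₀ ≤ m →
      (2 * k - 1 : ℝ) * (1 - a / (2 * k - 1 : ℝ) ^ m) ≤
        Filter.limsup (fun r : ℕ => ((apCount k m r : ℝ)) ^ ((r : ℝ)⁻¹)) atTop := by
  have hk2 : (2 : ℝ) ≤ (k : ℝ) := by exact_mod_cast hk
  set β : ℝ := 2 * (k : ℝ) - 1 with hβdef
  have hβ3 : 3 ≤ β := by simp only [hβdef]; linarith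
  have hβ1 : 1 < β := by linarith
  have hβ0 : 0 < β := by linarith
  have ha0 : 0 < a := by linarith
  have haβ : β + 1 ≤ a := by push_cast at ha ⊢; linarith
  -- eventual conditions
  have hinv0 : (0:ℝ) ≤ β⁻¹ := inv_nonneg.2 hβ0.le
  have hinv1 : β⁻¹ < 1 := inv_lt_one_of_one_lt₀ hβ1
  have hev1 : ∀ᶠ m in atTop, a * (β⁻¹) ^ m ≤ 1 / 2 := by
    have ht : Tendsto (fun m : ℕ => a * (β⁻¹) ^ m) atTop (nhds 0) := by
      simpa using (tendsto_pow_atTop_nhds_zero_of_lt_one hinv0 hinv1).const_mul a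
    filter_upwards [ht.eventually (gt_mem_nhds (show (0:ℝ) < 1/2 by norm_num))] with m hm
    exact hm.le
  have hev2 : ∀ᶠ m : ℕ in atTop, β + a ^ 2 * m * (β⁻¹) ^ m ≤ a := by
    have ht : Tendsto (fun m : ℕ => a ^ 2 * ((m : ℝ) * (β⁻¹) ^ m)) atTop (nhds 0) := by
      simpa using (tendsto_self_mul_const_pow_of_lt_one hinv0 hinv1).const_mul (a ^ 2)
    filter_upwards [ht.eventually (gt_mem_nhds (show (0:ℝ) < a - β by linarith))] with m hm
    have : a ^ 2 * ((m : ℝ) * (β⁻¹) ^ m) < a - β := hm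
    nlinarith [this]
  obtain ⟨m₀, hm₀⟩ := (((eventually_ge_atTop 2).and hev1).and hev2).exists_forall_of_atTop
  refine ⟨m₀, fun m hm => ?_⟩
  obtain ⟨⟨hm2, hδhalf⟩, hKey⟩ := hm₀ m hm
  obtain ⟨M, rfl⟩ : ∃ M, m = M + 1 := ⟨m - 1, by omega⟩
  have hM1 : 1 ≤ M := by omega
  have hβm : (0:ℝ) < β ^ (M+1) := pow_pos hβ0 _
  have hβM : (0:ℝ) < β ^ M := pow_pos hβ0 _
  set δ : ℝ := a / β ^ (M+1) with hδdef
  have hδ_inv : δ = a * (β⁻¹) ^ (M+1) := by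
    rw [hδdef, inv_pow, div_eq_mul_inv]
  have hδ0 : 0 < δ := div_pos ha0 hβm
  have hδh : δ ≤ 1 / 2 := by rw [hδ_inv]; exact hδhalf
  set q : ℝ := β * (1 - δ) with hqdef
  have hq1 : 1 < q := by
    have : β * (1 - δ) ≥ β * (1/2) := by
      apply mul_le_mul_of_nonneg_left (by linarith) hβ0.le
    nlinarith
  have hq0 : 0 < q := by linarith
  have hqβ : q < β := by nlinarith
  -- the key analytic inequality (★★) : q * β^M + a ≤ a * q^M
  have hstar : q * β ^ M + a ≤ a * q ^ M := by
    have hbern : 1 - (M:ℝ) * δ ≤ (1 - δ) ^ M := by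
      have h := one_add_mul_le_pow (a := -δ) (by linarith) M
      have e : (1 + -δ) = 1 - δ := by ring
      rw [e] at h
      linarith [h]
    have hqM : q ^ M = β ^ M * (1 - δ) ^ M := by rw [hqdef, mul_pow]
    have hδβM : δ * β ^ (M+1) = a := by
      rw [hδdef]; field_simp
    have hδβM2 : δ * β ^ M = a / β := by
      rw [hδdef, pow_succ]
      field_simp
    have hβsucc : β ^ (M+1) = β ^ M * β := pow_succ β M
    have hKey' : β ^ (M+1) + a ^ 2 * ((M:ℝ)+1) / β ≤ a * β ^ M := by
      have hexp : (β⁻¹) ^ (M+1) = (β ^ (M+1))⁻¹ := by rw [inv_pow]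
      rw [hexp] at hKey
      have h2 := mul_le_mul_of_nonneg_right hKey hβM.le
      push_cast at h2
      calc β ^ (M+1) + a ^ 2 * ((M:ℝ)+1) / β
          = (β + a ^ 2 * ((M:ℝ)+1) * (β ^ (M+1))⁻¹) * β ^ M := by
            rw [hβsucc]; field_simp
        _ ≤ a * β ^ M := h2
    have hqβM : q * β ^ M = β ^ (M+1) - a := by
      calc q * β ^ M = β ^ (M+1) * (1 - δ) := by rw [hqdef, hβsucc]; ring
        _ = β ^ (M+1) - δ * β ^ (M+1) := by ring
        _ = β ^ (M+1) - a := by rw [hδβM]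
    have h2 : a * β ^ M - a ^ 2 * (M:ℝ) / β ≤ a * q ^ M := by
      have e1 : a * β ^ M - a ^ 2 * (M:ℝ) / β = a * (β ^ M * (1 - (M:ℝ) * δ)) := by
        have e2 : a ^ 2 * (M:ℝ) / β = a * (M:ℝ) * (δ * β ^ M) := by rw [hδβM2]; ring
        rw [e2]; ring
      rw [e1, hqM]
      exact mul_le_mul_of_nonneg_left (mul_le_mul_of_nonneg_left hbern hβM.le) ha0.le
    have h3 : a ^ 2 * (M:ℝ) / β ≤ a ^ 2 * ((M:ℝ)+1) / β := by
      have h4 : a ^ 2 * (M:ℝ) ≤ a ^ 2 * ((M:ℝ)+1) :=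
        mul_le_mul_of_nonneg_left (by linarith) (sq_nonneg a)
      have h5 := mul_le_mul_of_nonneg_right h4 (inv_nonneg.2 hβ0.le)
      rw [div_eq_mul_inv, div_eq_mul_inv]
      exact h5
    rw [hqβM]
    linarith
  -- geometric sum bound
  set c : ℝ := (q ^ M)⁻¹ with hcdef
  have hQ0 : (0:ℝ) < q ^ M := pow_pos hq0 M
  have hQ1 : 1 < q ^ M := one_lt_pow₀ hq1 (by omega)
  have hc0 : (0:ℝ) ≤ c := inv_nonneg.2 hQ0.le
  have hc1 : c < 1 := inv_lt_one_of_one_lt₀ hQ1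
  have h1c : (0:ℝ) < 1 - c := by linarith
  have hsum : ∀ T : ℕ, q * ∑ t ∈ Finset.Icc 1 T, c ^ t ≤ β * δ := by
    intro T
    have h1 := geom_Icc_le hc0 hc1 T
    have h2 : q * ∑ t ∈ Finset.Icc 1 T, c ^ t ≤ q * (c / (1 - c)) :=
      mul_le_mul_of_nonneg_left h1 hq0.le
    refine h2.trans ?_
    have e1 : q * (c / (1 - c)) = q / (q ^ M - 1) := by
      have h2 : q ^ M - 1 ≠ 0 := by linarith
      have h3 : (q:ℝ) ^ M ≠ 0 := hQ0.ne'
      have h4 : 1 - c ≠ 0 := h1c.ne'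
      rw [hcdef] at h4 ⊢
      field_simp
    have e2 : β * δ = a / β ^ M := by
      rw [hδdef, pow_succ]
      field_simp
    rw [e1, e2, div_le_div_iff₀ (by linarith) hβM]
    linarith [hstar]
  -- main induction : q * Nc n ≤ Nc (n+1)
  have hk1 : 1 ≤ k := by omega
  have hcastβ : ((2 * k - 1 : ℕ) : ℝ) = β := by
    rw [Nat.cast_sub (by omega : 1 ≤ 2 * k)]
    push_cast
    rw [hβdef]
  have main : ∀ n, q * (Nc k (M+1) n : ℝ) ≤ (Nc k (M+1) (n+1) : ℝ) := by
    intro n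
    induction n using Nat.strong_induction_on with
    | _ n IH =>
    have chain : ∀ j i, i + j ≤ n → q ^ j * (Nc k (M+1) i : ℝ) ≤ (Nc k (M+1) (i+j) : ℝ) := by
      intro j
      induction j with
      | zero => intro i _; simp
      | succ j hj =>
        intro i hij
        have h1 := hj i (by omega)
        have h2 := IH (i+j) (by omega)
        have h3 : q ^ (j+1) * (Nc k (M+1) i : ℝ) = q * (q ^ j * (Nc k (M+1) i : ℝ)) := by ring
        rw [h3]
        calc q * (q ^ j * (Nc k (M+1) i : ℝ)) ≤ q * (Nc k (M+1) (i+j) : ℝ) :=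
              mul_le_mul_of_nonneg_left h1 hq0.le
          _ ≤ _ := h2
    rcases Nat.eq_zero_or_pos n with rfl | hn
    · rw [Nc_zero (M+1) (by omega), Nc_one (M+1) hm2]
      push_cast
      rw [hβdef] at hqβ
      linarith
    · have hkeyN := key (k := k) (M+1) n hk1 hm2 hn
      simp only [Nat.add_sub_cancel] at hkeyN
      have hkeyR : β * (Nc k (M+1) n : ℝ) ≤ (Nc k (M+1) (n+1) : ℝ) +
          ∑ t ∈ Finset.Icc 1 ((n+1)/(M+1)), (Nc k (M+1) (n + 1 - t * M) : ℝ) := by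
        have h := (Nat.cast_le (α := ℝ)).2 hkeyN
        push_cast [Nat.cast_sub (by omega : 1 ≤ 2 * k)] at h
        rw [hβdef]
        exact h
      have hterm : ∀ t ∈ Finset.Icc 1 ((n+1)/(M+1)),
          (Nc k (M+1) (n + 1 - t * M) : ℝ) ≤ (Nc k (M+1) n : ℝ) * (q * c ^ t) := by
        intro t ht
        rw [Finset.mem_Icc] at ht
        have htm : t * (M+1) ≤ n + 1 := (Nat.le_div_iff_mul_le (by omega)).1 ht.2
        have hmulsucc : t * (M+1) = t * M + t := by ring
        have hj1 : 1 ≤ t * M := by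
          have := Nat.mul_le_mul ht.1 hM1
          simpa using this
        have hjn : t * M ≤ n := by omega
        obtain ⟨j', hj'e⟩ : ∃ j', t * M = j' + 1 := ⟨t * M - 1, by omega⟩
        have hch := chain j' (n + 1 - t * M) (by omega)
        rw [show n + 1 - t * M + j' = n by omega] at hch
        have hgoal_eq : (Nc k (M+1) n : ℝ) * (q * c ^ t) = (Nc k (M+1) n : ℝ) * (q⁻¹) ^ j' := by
          congr 1
          rw [hcdef, ← inv_pow, ← pow_mul, mul_comm M t, hj'e, pow_succ]
          rw [mul_comm ((q⁻¹) ^ j') q⁻¹, ← mul_assoc, mul_inv_cancel₀ hq0.ne', one_mul]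
        rw [hgoal_eq]
        have hqj : (0:ℝ) < q ^ j' := pow_pos hq0 _
        calc (Nc k (M+1) (n + 1 - t * M) : ℝ)
            = (q⁻¹) ^ j' * (q ^ j' * (Nc k (M+1) (n + 1 - t * M) : ℝ)) := by
              rw [← mul_assoc, inv_pow, inv_mul_cancel₀ hqj.ne', one_mul]
          _ ≤ (q⁻¹) ^ j' * (Nc k (M+1) n : ℝ) :=
              mul_le_mul_of_nonneg_left hch (pow_nonneg (inv_nonneg.2 hq0.le) _)
          _ = (Nc k (M+1) n : ℝ) * (q⁻¹) ^ j' := mul_comm _ _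
      have hsumterm : ∑ t ∈ Finset.Icc 1 ((n+1)/(M+1)), (Nc k (M+1) (n + 1 - t * M) : ℝ)
          ≤ (Nc k (M+1) n : ℝ) * (β * δ) := by
        calc ∑ t ∈ Finset.Icc 1 ((n+1)/(M+1)), (Nc k (M+1) (n + 1 - t * M) : ℝ)
            ≤ ∑ t ∈ Finset.Icc 1 ((n+1)/(M+1)), (Nc k (M+1) n : ℝ) * (q * c ^ t) :=
              Finset.sum_le_sum hterm
          _ = (Nc k (M+1) n : ℝ) * (q * ∑ t ∈ Finset.Icc 1 ((n+1)/(M+1)), c ^ t) := by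
              rw [← Finset.mul_sum]
              congr 1
              rw [← Finset.mul_sum]
          _ ≤ (Nc k (M+1) n : ℝ) * (β * δ) :=
              mul_le_mul_of_nonneg_left (hsum _) (Nat.cast_nonneg _)
      have hqexp : q = β - β * δ := by rw [hqdef]; ring
      rw [hqexp]
      have e : (β - β * δ) * (Nc k (M+1) n : ℝ) =
          β * (Nc k (M+1) n : ℝ) - (Nc k (M+1) n : ℝ) * (β * δ) := by ring
      rw [e, sub_le_iff_le_add]
      exact hkeyR.trans (add_le_add_right hsumterm _)
  -- Nc n ≥ q^n
  have hpow : ∀ n, q ^ n ≤ (Nc k (M+1) n : ℝ) := by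
    intro n
    induction n with
    | zero => rw [Nc_zero (M+1) (by omega)]; simp
    | succ n ih =>
      calc q ^ (n+1) = q * q ^ n := by ring
        _ ≤ q * (Nc k (M+1) n : ℝ) := mul_le_mul_of_nonneg_left ih hq0.le
        _ ≤ _ := main n
  -- limsup part
  have hbC : (1:ℝ) ≤ 2 * (k:ℝ) + 1 := by linarith
  have hbdd : IsBoundedUnder (· ≤ ·) atTop
      (fun r : ℕ => ((apCount k (M+1) r : ℝ)) ^ ((r : ℝ)⁻¹)) := by
    refine ⟨(2 * (k:ℝ) + 1) ^ (2:ℝ), ?_⟩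
    rw [Filter.eventually_map]
    filter_upwards [eventually_ge_atTop 1] with r hr
    have hr0 : (0:ℝ) < r := by exact_mod_cast hr
    have hr1 : (1:ℝ) ≤ r := by exact_mod_cast hr
    have h1 : ((apCount k (M+1) r : ℝ)) ≤ (2 * (k:ℝ) + 1) ^ (r+1 : ℕ) := by
      exact_mod_cast apCount_le k (M+1) r
    calc ((apCount k (M+1) r : ℝ)) ^ ((r : ℝ)⁻¹)
        ≤ ((2 * (k:ℝ) + 1) ^ (r+1 : ℕ)) ^ ((r : ℝ)⁻¹) :=
          Real.rpow_le_rpow (Nat.cast_nonneg _) h1 (by positivity)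
      _ = (2 * (k:ℝ) + 1) ^ ((((r:ℕ)+1 : ℕ) : ℝ) * (r : ℝ)⁻¹) := by
          rw [← Real.rpow_natCast (2 * (k:ℝ) + 1) (r+1), ← Real.rpow_mul (by positivity)]
      _ ≤ (2 * (k:ℝ) + 1) ^ (2:ℝ) := by
          apply Real.rpow_le_rpow_of_exponent_le hbC
          push_cast
          rw [add_mul, mul_inv_cancel₀ hr0.ne']
          have : (r:ℝ)⁻¹ ≤ 1 := inv_le_one_of_one_le₀ hr1
          linarith
  have hfreq : ∃ᶠ r in atTop, q ≤ ((apCount k (M+1) r : ℝ)) ^ ((r : ℝ)⁻¹) := by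
    refine ((eventually_ge_atTop 1).mono fun r hr => ?_).frequently
    have hr0 : (0:ℝ) < r := by exact_mod_cast hr
    have h1 : q ^ r ≤ (apCount k (M+1) r : ℝ) :=
      (hpow r).trans (by exact_mod_cast Nc_le_apCount (M+1) r)
    have h2 : q = ((q ^ r : ℝ)) ^ ((r : ℝ)⁻¹) := by
      rw [← Real.rpow_natCast q r, ← Real.rpow_mul hq0.le, mul_inv_cancel₀ hr0.ne',
        Real.rpow_one]
    rw [h2]
    exact Real.rpow_le_rpow (pow_nonneg hq0.le r) h1 (by positivity)
  exact le_limsup_of_frequently_le hfreq hbdd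
end

section
/- Let k ≥ 2, m ≥ 2, and let μ ∈ ((2k-1)^{1/m}, 2k-1) satisfy (2k-1) − 2kμ/(μ^m − (2k-1)) ≥ μ. Suppose a sequence (c_s)_{s∈ℕ} of nonnegative reals satisfies c_0 = 1 and for all s: c_{s+1} ≥ (2k-1)c_s − (2k/(2k-1))·Σ_{j≥1}(2k-1)^j·c_{s+1−mj} (with c_t = 0 for t < 0). If additionally c_s ≥ μ·c_{s-1} for all s whenever this is forced inductively, then c_s ≥ μ^s for all s. -/
open Filter Set

/-- The inductive counting argument: if a nonnegative sequence `c` satisfies `c 0 = 1` and the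
recursive lower bound coming from counting aperiodic words, and `μ ∈ ((2k-1)^{1/m}, 2k-1)`
satisfies `(2k-1) - 2kμ/(μ^m - (2k-1)) ≥ μ`, then `c s ≥ μ·c (s-1)` for all `s ≥ 1` and
consequently `c s ≥ μ^s` for all `s`. -/
theorem aperiodic_inductive_bound (k m : ℕ) (hk : 2 ≤ k) (hm : 2 ≤ m) (μ : ℝ)
    (hμ₁ : (2 * k - 1 : ℝ) ^ ((m : ℝ)⁻¹) < μ) (hμ₂ : μ < 2 * k - 1)
    (hkey : μ ≤ (2 * k - 1 : ℝ) - 2 * k * μ / (μ ^ m - (2 * k - 1)))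
    (c : ℕ → ℝ) (hnonneg : ∀ s, 0 ≤ c s) (hc0 : c 0 = 1)
    (hrec : ∀ s : ℕ,
      (2 * k - 1 : ℝ) * c s -
        (2 * k / (2 * k - 1) : ℝ) *
          ∑ j ∈ Finset.Icc 1 (s + 1),
            (2 * k - 1 : ℝ) ^ j * (if m * j ≤ s + 1 then c (s + 1 - m * j) else 0)
        ≤ c (s + 1)) :
    (∀ s : ℕ, 1 ≤ s → μ * c (s - 1) ≤ c s) ∧ (∀ s : ℕ, μ ^ s ≤ c s) := by
  have hk' : (2 : ℝ) ≤ (k : ℝ) := by exact_mod_cast hk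
  set K : ℝ := 2 * (k : ℝ) - 1 with hKdef
  have hK1 : (1 : ℝ) < K := by simp only [hKdef]; linarith
  have hK0 : (0 : ℝ) < K := by linarith
  have hμ1 : (1 : ℝ) < μ :=
    lt_of_le_of_lt (Real.one_le_rpow hK1.le (by positivity)) hμ₁
  have hμ0 : (0 : ℝ) < μ := by linarith
  have hpow : K < μ ^ m := by
    calc K = (K ^ ((m : ℝ)⁻¹)) ^ m := (Real.rpow_inv_natCast_pow hK0.le (by omega)).symm
    _ < μ ^ m := pow_lt_pow_left₀ hμ₁ (Real.rpow_nonneg hK0.le _) (by omega)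
  have hM0 : (0 : ℝ) < μ ^ m := by positivity
  set q : ℝ := K / μ ^ m with hqdef
  have hq0 : 0 < q := by positivity
  have hq1 : q < 1 := (div_lt_one hM0).mpr hpow
  have hD0 : 0 < μ ^ m - K := by linarith
  -- geometric sum bound
  have hgeom : ∀ n : ℕ, ∑ j ∈ Finset.Icc 1 n, q ^ j ≤ K / (μ ^ m - K) := by
    intro n
    have h1 : (Finset.Icc 1 n) = Finset.Ico 1 (n + 1) := by
      ext x; simp [Nat.lt_succ_iff]
    rw [h1]
    calc ∑ j ∈ Finset.Ico 1 (n + 1), q ^ j ≤ q ^ 1 / (1 - q) :=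
          geom_sum_Ico_le_of_lt_one hq0.le hq1
    _ = K / (μ ^ m - K) := by
        rw [pow_one, hqdef]
        have hne : (1 : ℝ) - K / μ ^ m ≠ 0 := by
          have : (0:ℝ) < 1 - K / μ ^ m := by rw [← hqdef]; linarith
          linarith
        rw [div_eq_div_iff hne hD0.ne']
        field_simp
  -- chain lemma
  have chain : ∀ b : ℕ, (∀ t, 1 ≤ t → t ≤ b → μ * c (t - 1) ≤ c t) →
      ∀ a, a ≤ b → μ ^ (b - a) * c a ≤ c b := by
    intro b
    induction b with
    | zero =>
      intro _ a ha
      interval_cases a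
      simp
    | succ b ih =>
      intro H a ha
      rcases Nat.lt_or_ge a (b + 1) with h | h
      · have ha' : a ≤ b := Nat.lt_succ_iff.mp h
        have h1 : μ ^ (b - a) * c a ≤ c b :=
          ih (fun t ht htb => H t ht (htb.trans (Nat.le_succ b))) a ha'
        have h2 : μ * c b ≤ c (b + 1) := by
          have := H (b + 1) (by omega) le_rfl
          simpa using this
        have he : b + 1 - a = (b - a) + 1 := by omega
        rw [he, pow_succ]
        calc μ ^ (b - a) * μ * c a = μ * (μ ^ (b - a) * c a) := by ring
        _ ≤ μ * c b := mul_le_mul_of_nonneg_left h1 hμ0.le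
        _ ≤ c (b + 1) := h2
      · have : a = b + 1 := by omega
        subst this; simp
  -- main step
  have step : ∀ s : ℕ, ∀ t, 1 ≤ t → t ≤ s → μ * c (t - 1) ≤ c t := by
    intro s
    induction s with
    | zero => intro t ht hts; omega
    | succ s ih =>
      intro t ht hts
      rcases Nat.lt_or_ge t (s + 1) with h | h
      · exact ih t ht (Nat.lt_succ_iff.mp h)
      · have hts' : t = s + 1 := by omega
        subst hts'
        simp only [Nat.add_sub_cancel]
        -- bound each term of the sum
        have hterm : ∀ j ∈ Finset.Icc 1 (s + 1),
            K ^ j * (if m * j ≤ s + 1 then c (s + 1 - m * j) else 0)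
              ≤ μ * c s * q ^ j := by
          intro j hj
          simp only [Finset.mem_Icc] at hj
          by_cases hcase : m * j ≤ s + 1
          · rw [if_pos hcase]
            have hmj1 : 1 ≤ m * j := by nlinarith [hj.1, hm]
            have hmj2 : 2 ≤ m * j := by nlinarith [hj.1, hm]
            set t0 := s + 1 - m * j with ht0
            have ht0s : t0 ≤ s := by omega
            have hsub : s - t0 = m * j - 1 := by omega
            have hch : μ ^ (m * j - 1) * c t0 ≤ c s := by
              have := chain s ih t0 ht0s
              rwa [hsub] at this
            -- K^j * c t0 ≤ μ * c s * q^j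
            have hqj : q ^ j = K ^ j / μ ^ (m * j) := by
              rw [hqdef, div_pow, ← pow_mul]
            rw [hqj]
            have hmm : μ ^ (m * j) = μ ^ (m * j - 1) * μ := by
              rw [← pow_succ]; congr 1; omega
            have hpos : (0 : ℝ) < μ ^ (m * j - 1) := by positivity
            rw [hmm]
            rw [div_eq_mul_inv, mul_inv]
            have key : c t0 ≤ c s / μ ^ (m * j - 1) :=
              (le_div_iff₀ hpos).mpr (by linarith [hch, mul_comm (c t0) (μ ^ (m * j - 1))])
            calc K ^ j * c t0 ≤ K ^ j * (c s / μ ^ (m * j - 1)) := by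
                  exact mul_le_mul_of_nonneg_left key (by positivity)
            _ = μ * c s * (K ^ j * ((μ ^ (m * j - 1))⁻¹ * μ⁻¹)) := by
                  field_simp
          · rw [if_neg hcase]
            rw [mul_zero]
            have : 0 ≤ μ * c s * q ^ j :=
              mul_nonneg (mul_nonneg hμ0.le (hnonneg s)) (by positivity)
            linarith
        have hsum : ∑ j ∈ Finset.Icc 1 (s + 1),
            K ^ j * (if m * j ≤ s + 1 then c (s + 1 - m * j) else 0)
            ≤ μ * c s * (K / (μ ^ m - K)) := by
          calc _ ≤ ∑ j ∈ Finset.Icc 1 (s + 1), μ * c s * q ^ j :=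
                Finset.sum_le_sum hterm
          _ = μ * c s * ∑ j ∈ Finset.Icc 1 (s + 1), q ^ j := by
                rw [Finset.mul_sum]
          _ ≤ μ * c s * (K / (μ ^ m - K)) := by
                exact mul_le_mul_of_nonneg_left (hgeom (s + 1))
                  (mul_nonneg hμ0.le (hnonneg s))
        have hfac : (0 : ℝ) < 2 * (k : ℝ) / K := by positivity
        have hmul : (2 * (k : ℝ) / K) *
            (∑ j ∈ Finset.Icc 1 (s + 1),
              K ^ j * (if m * j ≤ s + 1 then c (s + 1 - m * j) else 0))
            ≤ (2 * (k : ℝ) / K) * (μ * c s * (K / (μ ^ m - K))) :=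
          mul_le_mul_of_nonneg_left hsum hfac.le
        have e1 : (2 * (k : ℝ) / K) * (μ * c s * (K / (μ ^ m - K)))
            = 2 * k * μ * c s / (μ ^ m - K) := by
          field_simp
        have e2 : μ * c s ≤ K * c s - 2 * k * μ * c s / (μ ^ m - K) := by
          have h := mul_le_mul_of_nonneg_right hkey (hnonneg s)
          have : (K - 2 * ↑k * μ / (μ ^ m - K)) * c s
              = K * c s - 2 * k * μ * c s / (μ ^ m - K) := by ring
          rw [this] at h
          exact h
        have hr := hrec s
        rw [e1] at hmul
        linarith
  refine ⟨fun s hs => step s s hs le_rfl, fun s => ?_⟩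
  induction s with
  | zero => simp [hc0]
  | succ s ih =>
    have h1 : μ * c s ≤ c (s + 1) := by
      have := step (s + 1) (s + 1) (by omega) le_rfl
      simpa using this
    calc μ ^ (s + 1) = μ * μ ^ s := by ring
    _ ≤ μ * c s := mul_le_mul_of_nonneg_left ih hμ0.le
    _ ≤ c (s + 1) := h1
end

section
/- For every a > 2k with k ≥ 2, setting λ = 2k-1 and μ_m = λ(1 − a·λ^{−m}), the quantity f_m(μ_m) = λ − 2k·μ_m/(μ_m^m − λ) satisfies f_m(μ_m) ≥ μ_m for all sufficiently large m. -/
open Filter Set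

lemma eventually_linear_le_pow (c d l : ℝ) (hl : 1 < l) :
    ∀ᶠ m : ℕ in atTop, c * m + d ≤ l ^ m := by
  have hl0 : 0 < l := lt_trans one_pos hl
  have hinv : l⁻¹ < 1 := inv_lt_one_of_one_lt₀ hl
  have hinv0 : (0:ℝ) ≤ l⁻¹ := (inv_pos.mpr hl0).le
  have h1 : Tendsto (fun m : ℕ => c * (m * l⁻¹ ^ m) + d * l⁻¹ ^ m) atTop (nhds (c * 0 + d * 0)) :=
    ((tendsto_self_mul_const_pow_of_lt_one hinv0 hinv).const_mul c).add
      ((tendsto_pow_atTop_nhds_zero_of_lt_one hinv0 hinv).const_mul d)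
  rw [mul_zero, mul_zero, add_zero] at h1
  have h2 : ∀ᶠ m : ℕ in atTop, c * (m * l⁻¹ ^ m) + d * l⁻¹ ^ m ≤ 1 :=
    h1.eventually_le_const one_pos
  filter_upwards [h2] with m hm
  have hpow : (0:ℝ) < l ^ m := pow_pos hl0 m
  have := mul_le_mul_of_nonneg_right hm hpow.le
  calc c * m + d = (c * (m * l⁻¹ ^ m) + d * l⁻¹ ^ m) * l ^ m := by
        field_simp
        rw [one_div, inv_pow, mul_assoc, inv_mul_cancel₀ hpow.ne', mul_one]
    _ ≤ 1 * l ^ m := this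
    _ = l ^ m := one_mul _

/-- For `k ≥ 2`, `λ = 2k-1` and `a > 2k`, setting `μ_m = λ(1 - a·λ^{-m})`, the quantity
`f_m(μ_m) = λ - 2k·μ_m/(μ_m^m - λ)` satisfies `f_m(μ_m) ≥ μ_m` for all sufficiently large `m`. -/
theorem f_ge_mu_eventually (k : ℕ) (hk : 2 ≤ k) (a : ℝ) (ha : 2 * k < a) :
    ∃ m₀ : ℕ, ∀ m : ℕ, m₀ ≤ m →
      (2 * k - 1 : ℝ) * (1 - a / (2 * k - 1 : ℝ) ^ m) ≤
        (2 * k - 1 : ℝ) -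
          2 * k * ((2 * k - 1 : ℝ) * (1 - a / (2 * k - 1 : ℝ) ^ m)) /
            (((2 * k - 1 : ℝ) * (1 - a / (2 * k - 1 : ℝ) ^ m)) ^ m - (2 * k - 1 : ℝ)) := by
  set l : ℝ := 2 * k - 1 with hl_def
  have hk3 : (3:ℝ) ≤ l := by
    have : (2:ℝ) ≤ (k:ℝ) := by exact_mod_cast hk
    simp only [hl_def]; linarith
  have hl1 : (1:ℝ) < l := by linarith
  have hl0 : (0:ℝ) < l := by linarith
  have ha0 : 0 < a := lt_of_le_of_lt (by positivity) ha
  have hak : (0:ℝ) < a - 2 * k := by linarith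
  -- eventual conditions
  have E1 : ∀ᶠ m : ℕ in atTop, a / l ^ m ≤ 1 / 2 := by
    have h := (tendsto_pow_atTop_nhds_zero_of_lt_one
      (inv_pos.mpr hl0).le (inv_lt_one_of_one_lt₀ hl1)).const_mul a
    rw [mul_zero] at h
    have := h.eventually_le_const (show (0:ℝ) < 1/2 by norm_num)
    filter_upwards [this] with m hm
    rw [div_eq_mul_inv, ← inv_pow]; exact hm
  have E2 : ∀ᶠ m : ℕ in atTop, a * a / (a - 2 * k) * m + a * l / (a - 2 * k) ≤ l ^ m :=
    eventually_linear_le_pow _ _ l hl1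
  have E3 : ∀ᶠ m : ℕ in atTop, a * m + (l + 1) ≤ l ^ m := eventually_linear_le_pow _ _ l hl1
  have E4 : ∀ᶠ m : ℕ in atTop, 1 ≤ m := eventually_ge_atTop 1
  obtain ⟨m₀, hm₀⟩ := eventually_atTop.mp (((E1.and E2).and E3).and E4)
  refine ⟨m₀, fun m hm => ?_⟩
  obtain ⟨⟨⟨h1, h2⟩, h3⟩, _⟩ := hm₀ m hm
  set x : ℝ := a / l ^ m with hx_def
  have hx0 : 0 < x := div_pos ha0 (pow_pos hl0 m)
  have hxh : x ≤ 1/2 := h1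
  have hxl : x * l ^ m = a := by
    rw [hx_def]; field_simp
  -- μ and bounds
  set μ : ℝ := l * (1 - x) with hμ_def
  have hμ_le : μ ≤ l := by nlinarith
  have hμ_pos : 0 < μ := by nlinarith
  -- Bernoulli: (1 - x)^m ≥ 1 - m x
  have hbern : 1 - (m:ℝ) * x ≤ (1 - x) ^ m := by
    have := one_add_mul_le_pow (a := -x) (by linarith) m
    simp only [mul_neg, ← sub_eq_add_neg] at this; linarith
  have hμm : l ^ m - (m:ℝ) * a ≤ μ ^ m := by
    have h4 : l ^ m * (1 - (m:ℝ) * x) ≤ l ^ m * (1 - x) ^ m :=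
      mul_le_mul_of_nonneg_left hbern (pow_pos hl0 m).le
    calc l ^ m - (m:ℝ) * a = l ^ m * (1 - (m:ℝ) * x) := by
          rw [← hxl]; ring
      _ ≤ l ^ m * (1 - x) ^ m := h4
      _ = μ ^ m := by rw [hμ_def, mul_pow]
  -- denominator positivity
  have hD : l + 1 ≤ μ ^ m := by nlinarith
  have hDpos : 0 < μ ^ m - l := by linarith
  -- key inequality: 2k * μ / (μ^m - l) ≤ l - μ
  have hlμ : l - μ = x * l := by rw [hμ_def]; ring
  have key : 2 * (k:ℝ) * μ / (μ ^ m - l) ≤ l - μ := by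
    rw [div_le_iff₀ hDpos, hlμ]
    have hpm : (0:ℝ) < l ^ m := pow_pos hl0 m
    have h5 : a * a * m + a * l ≤ (a - 2 * k) * l ^ m := by
      have h := mul_le_mul_of_nonneg_left h2 hak.le
      calc a * a * (m:ℝ) + a * l
          = (a - 2 * k) * (a * a / (a - 2 * k) * m + a * l / (a - 2 * k)) := by
            field_simp
        _ ≤ (a - 2 * k) * l ^ m := h
    have h6 : a * (l ^ m - m * a - l) ≤ a * (μ ^ m - l) :=
      mul_le_mul_of_nonneg_left (by linarith) ha0.le
    have h7 : 2 * (k:ℝ) * μ * l ^ m ≤ 2 * (k:ℝ) * l * l ^ m :=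
      mul_le_mul_of_nonneg_right
        (mul_le_mul_of_nonneg_left hμ_le (by positivity)) hpm.le
    have h9 : 2 * (k:ℝ) * l ^ m ≤ a * (l ^ m - m * a - l) := by
      have expand : a * (l ^ m - m * a - l) = a * l ^ m - a * a * m - a * l := by ring
      have expand2 : (a - 2 * (k:ℝ)) * l ^ m = a * l ^ m - 2 * k * l ^ m := by ring
      linarith
    have h10 : l * (2 * (k:ℝ) * l ^ m) ≤ l * (a * (μ ^ m - l)) :=
      mul_le_mul_of_nonneg_left (le_trans h9 h6) hl0.le
    rw [← mul_le_mul_iff_of_pos_right hpm]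
    have hrw : x * l * (μ ^ m - l) * l ^ m = a * l * (μ ^ m - l) := by
      rw [← hxl]; ring
    rw [hrw]
    calc 2 * (k:ℝ) * μ * l ^ m ≤ 2 * (k:ℝ) * l * l ^ m := h7
      _ = l * (2 * (k:ℝ) * l ^ m) := by ring
      _ ≤ l * (a * (μ ^ m - l)) := h10
      _ = a * l * (μ ^ m - l) := by ring
  linarith [key]
end

section
/- Let G be a finitely generated group with growth rate λ > 1 such that there exists α ≥ 1 with |B(r)| ≤ α·λ^r for all r ≥ 0. If T ⊆ G is a subset such that there exists a > 0 with: for all r ≥ 0 there exists s ≥ r with |T ∩ B(s)| ≥ a·λ^s, and T has the property that every element of T ∩ B(s) factors as uv with u ∈ T ∩ B(r) and |v| ≤ s − r + 1, then there exists β > 0 with |T ∩ B(r)| ≥ β·λ^r for all r ≥ 0. -/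
open Filter Set

/-- Word length of `g` with respect to the symmetrized generating set `S ∪ S⁻¹`. -/
noncomputable def wordLength {G : Type*} [Group G] (S : Set G) (g : G) : ℕ :=
  sInf {n | ∃ l : List G, l.length = n ∧ (∀ x ∈ l, x ∈ S ∪ S⁻¹) ∧ l.prod = g}

/-- The ball of radius `r` in the word metric. -/
noncomputable def wordBall {G : Type*} [Group G] (S : Set G) (r : ℕ) : Set G :=
  {g | wordLength S g ≤ r}

lemma wordLength_spec {G : Type*} [Group G] (S : Set G)
    (hgen : Subgroup.closure S = ⊤) (g : G) :
    ∃ l : List G, l.length = wordLength S g ∧ (∀ x ∈ l, x ∈ S ∪ S⁻¹) ∧ l.prod = g := by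
  have hg : g ∈ Subgroup.closure S := hgen ▸ Subgroup.mem_top g
  have hg' : g ∈ Submonoid.closure (S ∪ S⁻¹) := by
    rw [← Subgroup.closure_toSubmonoid]; exact hg
  obtain ⟨l, hl, hprod⟩ := Submonoid.exists_list_of_mem_closure hg'
  have hne : {n | ∃ l : List G, l.length = n ∧ (∀ x ∈ l, x ∈ S ∪ S⁻¹) ∧ l.prod = g}.Nonempty :=
    ⟨l.length, l, rfl, hl, hprod⟩
  exact Nat.sInf_mem hne

lemma wordBall_finite {G : Type*} [Group G] (S : Finset G)
    (hgen : Subgroup.closure (S : Set G) = ⊤) (r : ℕ) :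
    (wordBall (S : Set G) r).Finite := by
  set F : Set G := (S : Set G) ∪ (S : Set G)⁻¹ with hF
  have hFfin : F.Finite := S.finite_toSet.union S.finite_toSet.inv
  haveI : Finite F := hFfin.to_subtype
  have : wordBall (S : Set G) r ⊆
      (fun l : List F => (l.map Subtype.val).prod) '' {l | l.length ≤ r} := by
    intro g hg
    obtain ⟨l, hlen, hmem, hprod⟩ := wordLength_spec (S : Set G) hgen g
    refine ⟨l.pmap Subtype.mk hmem, by simpa [hlen, wordBall] using hg, ?_⟩
    simp [List.map_pmap, hprod]
  exact ((List.finite_length_le F r).image _).subset this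

lemma my_ncard_prod {A B : Type*} (s : Set A) (t : Set B) :
    (s ×ˢ t).ncard = s.ncard * t.ncard := by
  rw [← Nat.card_coe_set_eq, ← Nat.card_coe_set_eq, ← Nat.card_coe_set_eq,
    Nat.card_congr (Equiv.Set.prod s t), Nat.card_prod]

/-- If `|B(r)| ≤ α·λ^r`, `T` has `|T ∩ B(s)| ≥ a·λ^s` for arbitrarily large `s`, and every
element of `T ∩ B(s)` factors as `uv` with `u ∈ T ∩ B(r)` and `|v| ≤ s - r + 1`, then
`|T ∩ B(r)| ≥ β·λ^r` for some `β > 0` and all `r`. -/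
theorem essential_type_uniform_growth {G : Type*} [Group G] (S : Finset G)
    (hgen : Subgroup.closure (S : Set G) = ⊤) (lam α : ℝ) (hlam : 1 < lam) (hα : 1 ≤ α)
    (hcoo : ∀ r : ℕ, ((wordBall (S : Set G) r).ncard : ℝ) ≤ α * lam ^ r)
    (T : Set G)
    (ha : ∃ a > (0 : ℝ), ∀ r : ℕ, ∃ s ≥ r,
      a * lam ^ s ≤ ((T ∩ wordBall (S : Set G) s).ncard : ℝ))
    (hfact : ∀ r s : ℕ, r ≤ s → ∀ g ∈ T ∩ wordBall (S : Set G) s,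
      ∃ u v : G, u ∈ T ∩ wordBall (S : Set G) r ∧
        wordLength (S : Set G) v ≤ s - r + 1 ∧ g = u * v) :
    ∃ β > (0 : ℝ), ∀ r : ℕ, β * lam ^ r ≤ ((T ∩ wordBall (S : Set G) r).ncard : ℝ) := by
  obtain ⟨a, ha0, hA⟩ := ha
  have hlam0 : (0 : ℝ) < lam := lt_trans one_pos hlam
  have hα0 : (0 : ℝ) < α := lt_of_lt_of_le one_pos hα
  refine ⟨a / (α * lam), by positivity, fun r => ?_⟩
  obtain ⟨s, hrs, hs⟩ := hA r
  set Nr : ℝ := ((T ∩ wordBall (S : Set G) r).ncard : ℝ) with hNr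
  have hB : (wordBall (S : Set G) (s - r + 1)).Finite := wordBall_finite S hgen _
  have hTr : (T ∩ wordBall (S : Set G) r).Finite :=
    ((wordBall_finite S hgen r).subset Set.inter_subset_right)
  have hsub : T ∩ wordBall (S : Set G) s ⊆
      (fun p : G × G => p.1 * p.2) ''
        ((T ∩ wordBall (S : Set G) r) ×ˢ wordBall (S : Set G) (s - r + 1)) := by
    intro g hg
    obtain ⟨u, v, hu, hv, rfl⟩ := hfact r s hrs g hg
    exact ⟨(u, v), ⟨hu, hv⟩, rfl⟩
  have hcard : ((T ∩ wordBall (S : Set G) s).ncard : ℝ) ≤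
      Nr * ((wordBall (S : Set G) (s - r + 1)).ncard : ℝ) := by
    have h1 := Set.ncard_le_ncard hsub ((hTr.prod hB).image _)
    have h2 := Set.ncard_image_le (f := fun p : G × G => p.1 * p.2) (hTr.prod hB)
    have h3 := my_ncard_prod (T ∩ wordBall (S : Set G) r) (wordBall (S : Set G) (s - r + 1))
    have : (T ∩ wordBall (S : Set G) s).ncard ≤
        (T ∩ wordBall (S : Set G) r).ncard * (wordBall (S : Set G) (s - r + 1)).ncard := by
      omega
    rw [hNr]; exact_mod_cast this
  have hNr0 : (0 : ℝ) ≤ Nr := Nat.cast_nonneg _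
  have hchain : a * lam ^ s ≤ Nr * (α * lam ^ (s - r + 1)) :=
    hs.trans (hcard.trans (mul_le_mul_of_nonneg_left (hcoo _) hNr0))
  have hpowpos : (0 : ℝ) < lam ^ s := pow_pos hlam0 s
  rw [div_mul_eq_mul_div, div_le_iff₀ (by positivity)]
  have hmul : (a * lam ^ r) * lam ^ s ≤ (Nr * (α * lam)) * lam ^ s := by
    have e : lam ^ (s - r + 1) * lam ^ r = lam * lam ^ s := by
      rw [← pow_add, show s - r + 1 + r = s + 1 by omega, pow_succ]
      ring
    calc (a * lam ^ r) * lam ^ s = (a * lam ^ s) * lam ^ r := by ring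
      _ ≤ (Nr * (α * lam ^ (s - r + 1))) * lam ^ r :=
          mul_le_mul_of_nonneg_right hchain (le_of_lt (pow_pos hlam0 r))
      _ = Nr * α * (lam ^ (s - r + 1) * lam ^ r) := by ring
      _ = (Nr * (α * lam)) * lam ^ s := by rw [e]; ring
  exact le_of_mul_le_mul_right hmul hpowpos
end

section
/- Let λ > 1, μ ∈ (1, λ), r > 0, and constants κ_1, κ_2 > 0, L ≥ 0, τ > 0, m ∈ ℕ with μ^m > λ. Suppose (c_s)_{s∈ℝ_+} is a nondecreasing nonnegative function with c_0 ≥ 1 satisfying for all s ≥ 0: c_{s+r} ≥ κ_1·λ^r·c_s − κ_2·λ^{2(L+r)}·Σ_{j≥1} λ^{jτ}·c_{s+r+2L−mjτ} (with c_t = 0 for t < 0), and suppose mτ ≥ 2L + r and κ_1·λ^r − κ_2·λ^{4(L+r)}·λ^τ/(μ^{mτ}−λ^τ) ≥ μ^r. Then c_{ir} ≥ μ^{ir} for all i ∈ ℕ. -/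
open Filter Set Real

set_option maxHeartbeats 1600000 in
/-- The main inductive estimate: if a nondecreasing nonnegative function `c` on `ℝ` (vanishing
on negative reals, with `c 0 ≥ 1`) satisfies the recursive lower bound
`c (s+r) ≥ κ₁·λ^r·c s - κ₂·λ^{2(L+r)}·Σ_{j≥1} λ^{jτ}·c (s+r+2L-mjτ)`, and if `mτ ≥ 2L + r` and
`κ₁·λ^r - κ₂·λ^{4(L+r)}·λ^τ/(μ^{mτ}-λ^τ) ≥ μ^r` with `μ^m > λ`, then `c (ir) ≥ μ^{ir}` for all
`i ∈ ℕ`. -/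
theorem inductive_growth_estimate (lam μ r κ₁ κ₂ L τ : ℝ) (m : ℕ)
    (hlam : 1 < lam) (hμ₁ : 1 < μ) (hμ₂ : μ < lam) (hr : 0 < r)
    (hκ₁ : 0 < κ₁) (hκ₂ : 0 < κ₂) (hL : 0 ≤ L) (hτ : 0 < τ)
    (hμm : lam < μ ^ (m : ℝ))
    (hmτ : 2 * L + r ≤ (m : ℝ) * τ)
    (hkey : μ ^ r ≤ κ₁ * lam ^ r - κ₂ * lam ^ (4 * (L + r)) * lam ^ τ /
      (μ ^ ((m : ℝ) * τ) - lam ^ τ))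
    (c : ℝ → ℝ)
    (hnonneg : ∀ t : ℝ, 0 ≤ c t)
    (hmono : ∀ s t : ℝ, 0 ≤ s → s ≤ t → c s ≤ c t)
    (hzero : ∀ t : ℝ, t < 0 → c t = 0)
    (hc0 : 1 ≤ c 0)
    (hrec : ∀ s : ℝ, 0 ≤ s →
      κ₁ * lam ^ r * c s -
          κ₂ * lam ^ (2 * (L + r)) *
            ∑' j : ℕ+, lam ^ ((j : ℝ) * τ) * c (s + r + 2 * L - (m : ℝ) * (j : ℝ) * τ)
        ≤ c (s + r)) :
    ∀ i : ℕ, μ ^ ((i : ℝ) * r) ≤ c ((i : ℝ) * r) := by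
  have hlam0 : (0:ℝ) < lam := lt_trans one_pos hlam
  have hμ0 : (0:ℝ) < μ := lt_trans one_pos hμ₁
  -- M := μ^(mτ), and lam^τ < M
  have hMlt : lam ^ τ < μ ^ ((m:ℝ) * τ) := by
    have h1 : lam ^ τ < (μ ^ (m:ℝ)) ^ τ := rpow_lt_rpow hlam0.le hμm hτ
    rwa [← Real.rpow_mul hμ0.le] at h1
  have hD : 0 < μ ^ ((m:ℝ) * τ) - lam ^ τ := sub_pos.mpr hMlt
  set q : ℝ := lam ^ τ / μ ^ ((m:ℝ) * τ) with hqdef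
  have hq0 : 0 < q := div_pos (rpow_pos_of_pos hlam0 τ) (rpow_pos_of_pos hμ0 _)
  have hq1 : q < 1 := (div_lt_one (rpow_pos_of_pos hμ0 _)).mpr hMlt
  -- the main inductive statement
  have key : ∀ i : ℕ, ∀ k : ℕ, k ≤ i →
      μ ^ (((i:ℝ) - (k:ℝ)) * r) * c ((k:ℝ) * r) ≤ c ((i:ℝ) * r) := by
    intro i
    induction i with
    | zero =>
      intro k hk
      interval_cases k
      simp
    | succ i ih =>
      -- step lemma: μ^r * c (i r) ≤ c ((i+1) r)
      have hbound : ∀ t : ℝ, 0 ≤ t →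
          c ((i:ℝ) * r - t) ≤ μ ^ (r - t) * c ((i:ℝ) * r) := by
        intro t ht
        rcases lt_or_ge ((i:ℝ) * r - t) 0 with hneg | hpos
        · rw [hzero _ hneg]
          exact mul_nonneg (rpow_pos_of_pos hμ0 _).le (hnonneg _)
        · set n : ℕ := ⌊t / r⌋₊ with hndef
          have htr0 : 0 ≤ t / r := div_nonneg ht hr.le
          have hn1 : (n:ℝ) * r ≤ t := by
            have := Nat.floor_le htr0
            calc (n:ℝ) * r ≤ (t / r) * r := by nlinarith
            _ = t := div_mul_cancel₀ t hr.ne'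
          have hn2 : t - r ≤ (n:ℝ) * r := by
            have := Nat.lt_floor_add_one (t / r)
            have h2 : t < ((n:ℝ) + 1) * r := by
              calc t = (t / r) * r := (div_mul_cancel₀ t hr.ne').symm
              _ < ((n:ℝ) + 1) * r := by nlinarith
            nlinarith
          have hni : n ≤ i := by
            have h3 : t / r ≤ (i:ℝ) := by
              rw [div_le_iff₀ hr]
              linarith [sub_nonneg.mp hpos]
            have := Nat.floor_le_floor h3
            simpa [hndef] using this
          have hcast : ((i - n : ℕ) : ℝ) = (i:ℝ) - (n:ℝ) := by
            push_cast [Nat.cast_sub hni]; ring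
          have hmono1 : c ((i:ℝ) * r - t) ≤ c (((i - n : ℕ) : ℝ) * r) := by
            apply hmono _ _ hpos
            rw [hcast]; nlinarith
          have hih := ih (i - n) (Nat.sub_le i n)
          rw [hcast] at hih
          have hexp : (i:ℝ) - ((i:ℝ) - (n:ℝ)) = (n:ℝ) := by ring
          rw [hexp] at hih
          -- hih : μ ^ ((n:ℝ)*r) * c (((i:ℝ)-(n:ℝ))*r) ≤ c ((i:ℝ)*r)
          have hμn : 0 < μ ^ ((n:ℝ) * r) := rpow_pos_of_pos hμ0 _
          have h4 : c (((i:ℝ) - (n:ℝ)) * r) ≤ μ ^ (-((n:ℝ) * r)) * c ((i:ℝ) * r) := by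
            rw [rpow_neg hμ0.le, inv_mul_eq_div, le_div_iff₀' hμn]
            exact hih
          have h5 : μ ^ (-((n:ℝ) * r)) ≤ μ ^ (r - t) :=
            rpow_le_rpow_of_exponent_le hμ₁.le (by linarith)
          calc c ((i:ℝ) * r - t) ≤ c (((i:ℝ) - (n:ℝ)) * r) := by
                rwa [hcast] at hmono1
            _ ≤ μ ^ (-((n:ℝ) * r)) * c ((i:ℝ) * r) := h4
            _ ≤ μ ^ (r - t) * c ((i:ℝ) * r) :=
                mul_le_mul_of_nonneg_right h5 (hnonneg _)
      -- bound the tail sum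
      set s : ℝ := (i:ℝ) * r with hsdef
      have hs0 : 0 ≤ s := by positivity
      have hC0 : 0 ≤ c s := hnonneg s
      set C : ℝ := μ ^ (2 * (L + r)) * c s with hCdef
      have hterm : ∀ j : ℕ+,
          lam ^ ((j:ℝ) * τ) * c (s + r + 2 * L - (m:ℝ) * (j:ℝ) * τ) ≤ C * q ^ (j:ℕ) := by
        intro j
        have hj1 : (1:ℝ) ≤ (j:ℝ) := by exact_mod_cast j.one_le
        have htj : 0 ≤ (m:ℝ) * (j:ℝ) * τ - r - 2 * L := by
          have hmτ0 : (0:ℝ) ≤ (m:ℝ) * τ := le_trans (by positivity) hmτ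
          have : (m:ℝ) * τ ≤ (m:ℝ) * (j:ℝ) * τ := by nlinarith [hmτ0, hj1]
          linarith
        have harg : s + r + 2 * L - (m:ℝ) * (j:ℝ) * τ
            = s - ((m:ℝ) * (j:ℝ) * τ - r - 2 * L) := by ring
        have h6 := hbound ((m:ℝ) * (j:ℝ) * τ - r - 2 * L) htj
        rw [← harg] at h6
        have h7 : c (s + r + 2 * L - (m:ℝ) * (j:ℝ) * τ)
            ≤ μ ^ (2 * (L + r) - (m:ℝ) * (j:ℝ) * τ) * c s := by
          have : r - ((m:ℝ) * (j:ℝ) * τ - r - 2 * L) = 2 * (L + r) - (m:ℝ) * (j:ℝ) * τ := by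
            ring
          rwa [this] at h6
        have hlamjτ : 0 ≤ lam ^ ((j:ℝ) * τ) := (rpow_pos_of_pos hlam0 _).le
        calc lam ^ ((j:ℝ) * τ) * c (s + r + 2 * L - (m:ℝ) * (j:ℝ) * τ)
            ≤ lam ^ ((j:ℝ) * τ) * (μ ^ (2 * (L + r) - (m:ℝ) * (j:ℝ) * τ) * c s) :=
              mul_le_mul_of_nonneg_left h7 hlamjτ
          _ = C * q ^ (j:ℕ) := by
              rw [hCdef, hqdef]
              rw [div_pow, sub_eq_add_neg, rpow_add hμ0, rpow_neg hμ0.le]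
              rw [← rpow_natCast (lam ^ τ) (j:ℕ), ← rpow_natCast (μ ^ ((m:ℝ)*τ)) (j:ℕ),
                ← Real.rpow_mul hlam0.le, ← Real.rpow_mul hμ0.le]
              have e1 : τ * (j:ℕ) = (j:ℝ) * τ := by push_cast; ring
              have e2 : (m:ℝ) * τ * (j:ℕ) = (m:ℝ) * (j:ℝ) * τ := by push_cast; ring
              rw [e1, e2]
              field_simp
      have hgeo : Summable (fun n : ℕ => C * q ^ n) :=
        (summable_geometric_of_lt_one hq0.le hq1).mul_left C
      have hsumb : Summable (fun j : ℕ+ => C * q ^ (j:ℕ)) := by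
        apply (Equiv.pnatEquivNat.symm.summable_iff
          (f := fun j : ℕ+ => C * q ^ (j:ℕ))).mp
        have : (fun j : ℕ+ => C * q ^ (j:ℕ)) ∘ Equiv.pnatEquivNat.symm
            = fun n : ℕ => C * q ^ (n + 1) := by
          funext n
          simp [Equiv.pnatEquivNat]
        rw [this]
        exact ((summable_geometric_of_lt_one hq0.le hq1).mul_left (C * q)).congr
          (by intro n; rw [pow_succ]; ring)
      have hsuma : Summable (fun j : ℕ+ =>
          lam ^ ((j:ℝ) * τ) * c (s + r + 2 * L - (m:ℝ) * (j:ℝ) * τ)) := by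
        apply Summable.of_nonneg_of_le _ hterm hsumb
        intro j
        exact mul_nonneg (rpow_pos_of_pos hlam0 _).le (hnonneg _)
      have htsum_b : ∑' j : ℕ+, C * q ^ (j:ℕ) = C * (q / (1 - q)) := by
        rw [← Equiv.pnatEquivNat.symm.tsum_eq (fun j : ℕ+ => C * q ^ (j:ℕ))]
        have : ∀ n : ℕ, C * q ^ ((Equiv.pnatEquivNat.symm n : ℕ+) : ℕ) = C * q * q ^ n := by
          intro n
          have : ((Equiv.pnatEquivNat.symm n : ℕ+) : ℕ) = n + 1 := by
            simp [Equiv.pnatEquivNat]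
          rw [this, pow_succ]; ring
        rw [tsum_congr this, tsum_mul_left, tsum_geometric_of_lt_one hq0.le hq1]
        rw [div_eq_mul_inv]; ring
      have hS : ∑' j : ℕ+, lam ^ ((j:ℝ) * τ) * c (s + r + 2 * L - (m:ℝ) * (j:ℝ) * τ)
          ≤ C * (q / (1 - q)) := by
        rw [← htsum_b]
        exact Summable.tsum_le_tsum hterm hsuma hsumb
      -- convert q/(1-q) to lam^τ/(M - lam^τ)
      have hqq : q / (1 - q) = lam ^ τ / (μ ^ ((m:ℝ) * τ) - lam ^ τ) := by
        rw [hqdef]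
        have hM0 : (0:ℝ) < μ ^ ((m:ℝ) * τ) := rpow_pos_of_pos hμ0 _
        field_simp
      -- the recursive step
      have hstep := hrec s hs0
      have hfin : μ ^ r * c s ≤ c (s + r) := by
        have h8 : κ₂ * lam ^ (2 * (L + r)) *
            (∑' j : ℕ+, lam ^ ((j:ℝ) * τ) * c (s + r + 2 * L - (m:ℝ) * (j:ℝ) * τ))
            ≤ κ₂ * lam ^ (4 * (L + r)) * lam ^ τ / (μ ^ ((m:ℝ) * τ) - lam ^ τ) * c s := by
          have h9 : κ₂ * lam ^ (2 * (L + r)) *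
              (∑' j : ℕ+, lam ^ ((j:ℝ) * τ) * c (s + r + 2 * L - (m:ℝ) * (j:ℝ) * τ))
              ≤ κ₂ * lam ^ (2 * (L + r)) * (C * (q / (1 - q))) := by
            apply mul_le_mul_of_nonneg_left hS
            positivity
          refine h9.trans ?_
          rw [hCdef, hqq]
          have hμlam : μ ^ (2 * (L + r)) ≤ lam ^ (2 * (L + r)) :=
            rpow_le_rpow hμ0.le hμ₂.le (by positivity)
          have hll : lam ^ (2 * (L + r)) * lam ^ (2 * (L + r)) = lam ^ (4 * (L + r)) := by
            rw [← rpow_add hlam0]; ring_nf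
          have hfrac : 0 ≤ lam ^ τ / (μ ^ ((m:ℝ) * τ) - lam ^ τ) :=
            div_nonneg (rpow_pos_of_pos hlam0 _).le hD.le
          calc κ₂ * lam ^ (2 * (L + r)) *
              (μ ^ (2 * (L + r)) * c s * (lam ^ τ / (μ ^ ((m:ℝ) * τ) - lam ^ τ)))
              ≤ κ₂ * lam ^ (2 * (L + r)) *
              (lam ^ (2 * (L + r)) * c s * (lam ^ τ / (μ ^ ((m:ℝ) * τ) - lam ^ τ))) := by
                apply mul_le_mul_of_nonneg_left _ (by positivity)
                apply mul_le_mul_of_nonneg_right _ hfrac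
                exact mul_le_mul_of_nonneg_right hμlam hC0
            _ = κ₂ * lam ^ (4 * (L + r)) * lam ^ τ / (μ ^ ((m:ℝ) * τ) - lam ^ τ) * c s := by
                rw [← hll]; field_simp
        have h10 : μ ^ r * c s ≤ κ₁ * lam ^ r * c s -
            κ₂ * lam ^ (4 * (L + r)) * lam ^ τ / (μ ^ ((m:ℝ) * τ) - lam ^ τ) * c s := by
          have := mul_le_mul_of_nonneg_right hkey hC0
          calc μ ^ r * c s ≤ (κ₁ * lam ^ r - κ₂ * lam ^ (4 * (L + r)) * lam ^ τ /
              (μ ^ ((m:ℝ) * τ) - lam ^ τ)) * c s := this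
            _ = _ := by ring
        linarith
      -- finish the induction step
      intro k hk
      rcases Nat.eq_or_lt_of_le hk with heq | hlt
      · subst heq
        simp
      · have hk' : k ≤ i := Nat.lt_succ_iff.mp hlt
        have hih := ih k hk'
        have hcast2 : ((i:ℝ) + 1 - (k:ℝ)) * r = r + ((i:ℝ) - (k:ℝ)) * r := by ring
        have hsucc : ((i + 1 : ℕ) : ℝ) * r = s + r := by push_cast [hsdef]; ring
        rw [hsucc]
        push_cast
        rw [hcast2, rpow_add hμ0, mul_assoc]
        calc μ ^ r * (μ ^ (((i:ℝ) - (k:ℝ)) * r) * c ((k:ℝ) * r))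
            ≤ μ ^ r * c s := by
              apply mul_le_mul_of_nonneg_left _ (rpow_pos_of_pos hμ0 r).le
              exact hih
          _ ≤ c (s + r) := hfin
  intro i
  have h := key i 0 (Nat.zero_le i)
  simp only [Nat.cast_zero, sub_zero, zero_mul] at h
  have hμir : 0 < μ ^ ((i:ℝ) * r) := rpow_pos_of_pos hμ0 _
  nlinarith [hnonneg 0]
end
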